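/- arXiv:2011.05724 — 3 statements merged into one kernel-verified Lean document; each statement's English description precedes it below -/
import Mathlib

section
/- Let V ⊆ V' be an extension of valuation rings with fraction fields K ⊆ K', maximal ideal m of V, and residue field extension k ⊆ k'. Let x₁,…,x_n ∈ V' be elements whose residues in k' are algebraically independent over k. Then x₁,…,x_n are algebraically independent over K, and the valuation ring V' ∩ K(x₁,…,x_n) equals the localization of the polynomial subring V[x₁,…,x_n] at the prime ideal m·V[x₁,…,x_n]; in particular V' ∩ K(x₁,…,x_n) is isomorphic to the localization V[X₁,…,X_n]_{mV[X₁,…,X_n]} of a polynomial ring over V and is ind-smooth over V. -/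
universe u v

/-- A ring homomorphism `f : A →+* B` is *ind-smooth* if `B` is a filtered colimit of smooth
`A`-algebras; equivalently (and this is the definition used here), every `A`-algebra homomorphism
`E → B` from a finitely presented `A`-algebra `E` factors through a smooth (i.e. finitely
presented and formally smooth) `A`-algebra. -/
def RingHom.IsIndSmooth {A : Type u} {B : Type v} [CommRing A] [CommRing B]
    (f : A →+* B) : Prop :=
  ∀ (E : Type u) [CommRing E] [Algebra A E], Algebra.FinitePresentation A E →
    ∀ w : E →+* B, w.comp (algebraMap A E) = f →
      ∃ (S : Type u) (_ : CommRing S) (_ : Algebra A S), Algebra.Smooth A S ∧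
        ∃ (g : E →ₐ[A] S) (h : S →+* B),
          h.comp g.toRingHom = w ∧ h.comp (algebraMap A S) = f

/-- The value group extension of an extension `f : V → V'` of valuation rings is *trivial* if
every nonzero element `x/y` of the fraction field of `V'` is, up to a unit of `V'`, of the form
`a/b` with `a, b` nonzero in `V`. -/
def RingHom.HasTrivialValueGroupExt {V : Type u} {V' : Type v} [CommRing V] [CommRing V']
    (f : V →+* V') : Prop :=
  ∀ x y : V', x ≠ 0 → y ≠ 0 → ∃ a b : V, a ≠ 0 ∧ b ≠ 0 ∧ Associated (x * f b) (y * f a)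


open MvPolynomial IsLocalRing
lemma valring_exists_min_dvd {ι : Type*} {V : Type*} [CommRing V] [IsDomain V] [ValuationRing V]
    (s : Finset ι) (f : ι → V) (hs : s.Nonempty) : ∃ i ∈ s, ∀ j ∈ s, f i ∣ f j := by
  classical
  induction s using Finset.induction_on with
  | empty => simp at hs
  | @insert a s ha ih =>
    rcases s.eq_empty_or_nonempty with rfl | hs'
    · exact ⟨a, Finset.mem_insert_self _ _, fun j hj => by
        rcases Finset.mem_insert.mp hj with rfl | hj
        · exact dvd_rfl
        · simp at hj⟩
    · obtain ⟨i, his, hmin⟩ := ih hs'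
      rcases ValuationRing.dvd_total (f a) (f i) with h | h
      · exact ⟨a, Finset.mem_insert_self _ _, fun j hj => by
          rcases Finset.mem_insert.mp hj with rfl | hj
          · exact dvd_rfl
          · exact h.trans (hmin j hj)⟩
      · exact ⟨i, Finset.mem_insert_of_mem his, fun j hj => by
          rcases Finset.mem_insert.mp hj with rfl | hj
          · exact h
          · exact hmin j hj⟩

lemma mvpoly_content_factor {V : Type u} [CommRing V] [IsDomain V] [ValuationRing V]
    {n : ℕ} {p : MvPolynomial (Fin n) V} (hp : p ≠ 0) :
    ∃ (c : V) (q : MvPolynomial (Fin n) V) (d : (Fin n) →₀ ℕ),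
      c ≠ 0 ∧ q.coeff d = 1 ∧ p = C c * q := by
  have hsupp : p.support.Nonempty := by
    rw [Finset.nonempty_iff_ne_empty, Ne, support_eq_empty]; exact hp
  obtain ⟨d, hd, hmin⟩ := valring_exists_min_dvd p.support (fun e => p.coeff e) hsupp
  have hc : p.coeff d ≠ 0 := mem_support_iff.mp hd
  have hdvd : C (p.coeff d) ∣ p := (C_dvd_iff_dvd_coeff _ _).mpr (fun i => by
    by_cases hi : i ∈ p.support
    · exact hmin i hi
    · rw [notMem_support_iff.mp hi]; exact dvd_zero _)
  obtain ⟨q, hq⟩ := hdvd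
  refine ⟨p.coeff d, q, d, hc, ?_, hq⟩
  have h2 := congrArg (fun r => MvPolynomial.coeff d r) hq
  simp only [coeff_C_mul] at h2
  exact (mul_left_cancel₀ hc (by rw [← h2, mul_one])).symm

/-- clearing denominators -/
lemma mvpoly_clear_denom {V : Type u} [CommRing V] [IsDomain V]
    (K : Type u) [Field K] [Algebra V K] [IsFractionRing V K]
    {n : ℕ} (A : MvPolynomial (Fin n) K) :
    ∃ (d : V) (p : MvPolynomial (Fin n) V), d ≠ 0 ∧
      MvPolynomial.map (algebraMap V K) p = C (algebraMap V K d) * A := by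
  induction A using MvPolynomial.induction_on with
  | C a =>
    obtain ⟨r, d, hd, ha⟩ := IsFractionRing.div_surjective (A := V) a
    refine ⟨d, C r, nonZeroDivisors.ne_zero hd, ?_⟩
    have hd0 : algebraMap V K d ≠ 0 := fun h =>
      nonZeroDivisors.ne_zero hd (IsFractionRing.injective V K (by rw [h, map_zero]))
    rw [map_C, ← C_mul]
    congr 1
    rw [← ha]
    field_simp
  | add p q hp hq =>
    obtain ⟨d₁, p₁, hd₁, h₁⟩ := hp
    obtain ⟨d₂, p₂, hd₂, h₂⟩ := hq
    refine ⟨d₁ * d₂, C d₂ * p₁ + C d₁ * p₂, mul_ne_zero hd₁ hd₂, ?_⟩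
    simp only [map_add, map_mul, map_C, h₁, h₂, map_mul]
    ring
  | mul_X p i hp =>
    obtain ⟨d, p₁, hd, h⟩ := hp
    exact ⟨d, p₁ * X i, hd, by simp only [map_mul, map_X, h]; ring⟩



set_option maxHeartbeats 2000000

/-- Let `V ⊆ V'` be an extension of valuation rings with fraction fields
`K ⊆ K'`, maximal ideal `m` of `V` and residue field extension `k ⊆ k'`.  If `x₁,…,x_n ∈ V'`
have residues in `k'` algebraically independent over `k`, then the `x_i` are algebraically
independent over `K`, the ring `V' ∩ K(x₁,…,x_n)` is the localization of `V[x₁,…,x_n]` at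
`m·V[x₁,…,x_n]` (so it is isomorphic to `V[X₁,…,X_n]_{m·V[X₁,…,X_n]}`), and it is ind-smooth
over `V`. -/
theorem intersection_adjoin_residue_transcendental
    (V : Type u) (V' : Type v) [CommRing V] [IsDomain V] [ValuationRing V]
    [CommRing V'] [IsDomain V'] [ValuationRing V'] [Algebra V V']
    (hinj : Function.Injective (algebraMap V V'))
    [IsLocalHom (algebraMap V V')]
    (K : Type u) (K' : Type v) [Field K] [Field K']
    [Algebra V K] [IsFractionRing V K] [Algebra V' K'] [IsFractionRing V' K']
    [Algebra K K'] [Algebra V K'] [IsScalarTower V K K'] [IsScalarTower V V' K']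
    (n : ℕ) (x : Fin n → V')
    (hx : haveI := (IsLocalRing.ResidueField.map (algebraMap V V')).toAlgebra
      AlgebraicIndependent (IsLocalRing.ResidueField V)
        fun i => IsLocalRing.residue V' (x i)) :
    letI F : IntermediateField K K' :=
      IntermediateField.adjoin K (Set.range fun i => algebraMap V' K' (x i))
    letI W : Subring K' := (algebraMap V' K').range ⊓ F.toSubring
    letI ρ : V →+* W := (algebraMap V K').codRestrict W (fun v =>
      Subring.mem_inf.mpr
        ⟨⟨algebraMap V V' v, (IsScalarTower.algebraMap_apply V V' K' v).symm⟩,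
          by rw [IsScalarTower.algebraMap_apply V K K']; exact F.algebraMap_mem _⟩)
    letI P : Ideal (MvPolynomial (Fin n) V) :=
      (IsLocalRing.maximalIdeal V).map (MvPolynomial.C)
    letI φ : MvPolynomial (Fin n) V →ₐ[V] K' :=
      MvPolynomial.aeval fun i => algebraMap V' K' (x i)
    -- the `xᵢ` are algebraically independent over `K`
    (AlgebraicIndependent K fun i => algebraMap V' K' (x i)) ∧
    -- `V' ∩ K(x₁,…,x_n)` equals the localization of `V[x₁,…,x_n]` at `m·V[x₁,…,x_n]`,
    -- as subrings of `K'`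
    (∀ z : K', ((∃ v' : V', algebraMap V' K' v' = z) ∧ z ∈ F) ↔
      ∃ p q : MvPolynomial (Fin n) V, q ∉ P ∧ z * φ q = φ p) ∧
    -- in particular it is isomorphic to `V[X₁,…,X_n]_{m·V[X₁,…,X_n]}` …
    (∃ hP : P.IsPrime, Nonempty (W ≃+* Localization (@Ideal.primeCompl _ _ P hP))) ∧
    -- … and ind-smooth over `V`
    ρ.IsIndSmooth := by
  classical
  set P : Ideal (MvPolynomial (Fin n) V) :=
    (IsLocalRing.maximalIdeal V).map (MvPolynomial.C) with hPdef
  set φ : MvPolynomial (Fin n) V →ₐ[V] K' :=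
    MvPolynomial.aeval (fun i => algebraMap V' K' (x i)) with hφdef
  set F : IntermediateField K K' :=
    IntermediateField.adjoin K (Set.range fun i => algebraMap V' K' (x i)) with hFdef
  set W : Subring K' := (algebraMap V' K').range ⊓ F.toSubring with hWdef
  letI : Algebra (ResidueField V) (ResidueField V') :=
    (IsLocalRing.ResidueField.map (algebraMap V V')).toAlgebra
  -- basic facts
  have hPker : P = RingHom.ker (MvPolynomial.map (residue V) :
      MvPolynomial (Fin n) V →+* MvPolynomial (Fin n) (ResidueField V)) := by
    rw [MvPolynomial.ker_map, ker_residue]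
  haveI hPprime : P.IsPrime := by rw [hPker]; exact RingHom.ker_isPrime _
  set φ' : MvPolynomial (Fin n) V →ₐ[V] V' := MvPolynomial.aeval x with hφ'def
  have hφeq : ∀ r, φ r = algebraMap V' K' (φ' r) := fun r => by
    show MvPolynomial.aeval (fun i => algebraMap V' K' (x i)) r = _
    rw [show (fun i => algebraMap V' K' (x i)) = (algebraMap V' K') ∘ x from rfl,
      aeval_algebraMap_apply]
  -- the commutative square with residue fields
  have hsquare : (residue V').comp φ'.toRingHom =
      ((MvPolynomial.aeval (fun i => residue V' (x i)) :
          MvPolynomial (Fin n) (ResidueField V) →ₐ[ResidueField V] (ResidueField V')).toRingHom).comp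
        (MvPolynomial.map (residue V)) := by
    apply MvPolynomial.ringHom_ext
    · intro v
      simp only [RingHom.comp_apply, MvPolynomial.map_C, AlgHom.toRingHom_eq_coe,
        RingHom.coe_coe, aeval_C]
      show residue V' (MvPolynomial.aeval x (C v)) =
        IsLocalRing.ResidueField.map (algebraMap V V') (residue V v)
      rw [aeval_C, IsLocalRing.ResidueField.map_residue]
    · intro i
      simp only [RingHom.comp_apply, MvPolynomial.map_X, AlgHom.toRingHom_eq_coe,
        RingHom.coe_coe, aeval_X]
      show residue V' (MvPolynomial.aeval x (X i)) = _
      rw [aeval_X]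
  -- units from outside P
  have hunit : ∀ q : MvPolynomial (Fin n) V, q ∉ P → IsUnit (φ' q) := by
    intro q hq
    rw [hPker, RingHom.mem_ker] at hq
    have h1 : residue V' (φ' q) ≠ 0 := by
      have h2 := congrArg (fun f => f q) (congrArg DFunLike.coe hsquare)
      simp only [RingHom.comp_apply, AlgHom.toRingHom_eq_coe, RingHom.coe_coe] at h2
      show residue V' (MvPolynomial.aeval x q) ≠ 0
      rw [show residue V' (MvPolynomial.aeval x q) =
        MvPolynomial.aeval (fun i => residue V' (x i))
          (MvPolynomial.map (residue V) q) from h2]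
      intro h0
      exact hq (hx (by rwa [map_zero]))
    rw [← IsLocalRing.notMem_maximalIdeal]
    intro hmem
    exact h1 ((IsLocalRing.residue_eq_zero_iff _).mpr hmem)
  -- injectivity of φ'
  have hφ'inj : ∀ p : MvPolynomial (Fin n) V, φ' p = 0 → p = 0 := by
    intro p hp
    by_contra hp0
    obtain ⟨c, q, d, hc, hcoeff, rfl⟩ := mvpoly_content_factor hp0
    have hqP : q ∉ P := by
      rw [hPker, RingHom.mem_ker]
      intro h0
      have := congrArg (fun r => MvPolynomial.coeff d r) h0
      simp only [MvPolynomial.coeff_map, hcoeff, coeff_zero, map_one] at this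
      exact one_ne_zero this
    have hu := hunit q hqP
    rw [map_mul] at hp
    have hC : φ' (C c) = algebraMap V V' c := by
      show MvPolynomial.aeval x (C c) = _; rw [aeval_C]
    rw [hC] at hp
    rcases mul_eq_zero.mp hp with h | h
    · exact hc (hinj (by rwa [map_zero]))
    · exact hu.ne_zero h
  have hφ'injK : ∀ p : MvPolynomial (Fin n) V, φ p = 0 → p = 0 := by
    intro p hp
    rw [hφeq] at hp
    exact hφ'inj p (IsFractionRing.injective V' K' (by rwa [map_zero]))
  have hVK'inj : Function.Injective (algebraMap V K') := by
    rw [IsScalarTower.algebraMap_eq V K K']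
    exact (algebraMap K K').injective.comp (IsFractionRing.injective V K)
  have hnotP : ∀ (q : MvPolynomial (Fin n) V) (d : (Fin n) →₀ ℕ),
      q.coeff d = 1 → q ∉ P := by
    intro q d hcoeff hq
    rw [hPker, RingHom.mem_ker] at hq
    have h2 := congrArg (fun r => MvPolynomial.coeff d r) hq
    simp only [MvPolynomial.coeff_map, hcoeff, coeff_zero, map_one] at h2
    exact one_ne_zero h2
  have honeP : (1 : MvPolynomial (Fin n) V) ∉ P := hnotP 1 0 (by simp)
  -- claim 1 : algebraic independence over K
  have claim1 : AlgebraicIndependent K fun i => algebraMap V' K' (x i) := by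
    rw [algebraicIndependent_iff]
    intro pK hpK
    obtain ⟨d, p, hd, hmap⟩ := mvpoly_clear_denom (V := V) K pK
    have h1 : φ p = MvPolynomial.aeval (fun i => algebraMap V' K' (x i))
        (MvPolynomial.map (algebraMap V K) p) := by
      rw [hφdef]; exact (aeval_map_algebraMap (A := K) _ _).symm
    rw [hmap, map_mul, aeval_C, hpK, mul_zero] at h1
    have hp0 := hφ'injK p h1
    rw [hp0, map_zero] at hmap
    have hd' : (C (algebraMap V K d) : MvPolynomial (Fin n) K) ≠ 0 := by
      simp only [Ne, MvPolynomial.C_eq_zero]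
      exact fun h => hd (IsFractionRing.injective V K (by rw [h, map_zero]))
    rcases mul_eq_zero.mp hmap.symm with h | h
    · exact absurd h hd'
    · exact h
  -- membership criterion for W
  have hW : ∀ z : K', z ∈ W ↔ ((∃ v' : V', algebraMap V' K' v' = z) ∧ z ∈ F) := by
    intro z
    rw [hWdef, Subring.mem_inf]
    exact Iff.rfl
  -- the key characterization (claim 2)
  have key : ∀ z : K', ((∃ v' : V', algebraMap V' K' v' = z) ∧ z ∈ F) ↔
      ∃ p q : MvPolynomial (Fin n) V, q ∉ P ∧ z * φ q = φ p := by
    intro z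
    constructor
    · rintro ⟨⟨v', rfl⟩, hzF⟩
      set z := algebraMap V' K' v' with hzdef
      by_cases hz0 : z = 0
      · exact ⟨0, 1, honeP, by rw [map_one, map_zero, mul_one]; exact hz0⟩
      rw [hFdef, IntermediateField.mem_adjoin_range_iff] at hzF
      obtain ⟨r, s, hz⟩ := hzF
      have hs0 : MvPolynomial.aeval (fun i => algebraMap V' K' (x i)) s ≠ 0 := by
        intro h; rw [h, div_zero] at hz; exact hz0 hz
      have hzs : z * MvPolynomial.aeval (fun i => algebraMap V' K' (x i)) s =
          MvPolynomial.aeval (fun i => algebraMap V' K' (x i)) r := by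
        rw [hz]; field_simp
      obtain ⟨d₁, pr, hd₁, hmr⟩ := mvpoly_clear_denom (V := V) K r
      obtain ⟨d₂, ps, hd₂, hms⟩ := mvpoly_clear_denom (V := V) K s
      have haev : ∀ (t : MvPolynomial (Fin n) V), φ t =
          MvPolynomial.aeval (fun i => algebraMap V' K' (x i))
            (MvPolynomial.map (algebraMap V K) t) := by
        intro t; rw [hφdef]; exact (aeval_map_algebraMap (A := K) _ _).symm
      have htower : ∀ c : V, algebraMap K K' (algebraMap V K c) = algebraMap V K' c :=
        fun c => (IsScalarTower.algebraMap_apply V K K' c).symm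
      have hφps : φ ps = algebraMap V K' d₂ *
          MvPolynomial.aeval (fun i => algebraMap V' K' (x i)) s := by
        rw [haev, hms, map_mul, aeval_C, htower]
      have hφpr : φ pr = algebraMap V K' d₁ *
          MvPolynomial.aeval (fun i => algebraMap V' K' (x i)) r := by
        rw [haev, hmr, map_mul, aeval_C, htower]
      have hφC : ∀ c : V, φ (C c) = algebraMap V K' c := fun c => by
        rw [hφdef]; exact aeval_C _ c
      have he₁ : algebraMap V K' d₁ ≠ 0 := fun h => hd₁ (hVK'inj (by rw [h, map_zero]))
      have he₂ : algebraMap V K' d₂ ≠ 0 := fun h => hd₂ (hVK'inj (by rw [h, map_zero]))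
      set q' : MvPolynomial (Fin n) V := C d₁ * ps with hq'def
      set p' : MvPolynomial (Fin n) V := C d₂ * pr with hp'def
      have hφq' : φ q' = algebraMap V K' d₁ * (algebraMap V K' d₂ *
          MvPolynomial.aeval (fun i => algebraMap V' K' (x i)) s) := by
        rw [hq'def, map_mul, hφC, hφps]
      have hφp' : φ p' = algebraMap V K' d₂ * (algebraMap V K' d₁ *
          MvPolynomial.aeval (fun i => algebraMap V' K' (x i)) r) := by
        rw [hp'def, map_mul, hφC, hφpr]
      have heq' : z * φ q' = φ p' := by
        rw [hφq', hφp']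
        calc z * (algebraMap V K' d₁ * (algebraMap V K' d₂ *
              MvPolynomial.aeval (fun i => algebraMap V' K' (x i)) s))
            = algebraMap V K' d₁ * algebraMap V K' d₂ *
              (z * MvPolynomial.aeval (fun i => algebraMap V' K' (x i)) s) := by ring
          _ = _ := by rw [hzs]; ring
      have hφq'0 : φ q' ≠ 0 := by
        rw [hφq']; exact mul_ne_zero he₁ (mul_ne_zero he₂ hs0)
      have hq'0 : q' ≠ 0 := fun h => hφq'0 (by rw [h, map_zero])
      have hφp'0 : φ p' ≠ 0 := by rw [← heq']; exact mul_ne_zero hz0 hφq'0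
      have hp'0 : p' ≠ 0 := fun h => hφp'0 (by rw [h, map_zero])
      obtain ⟨b, q₁, dq, hb, hcq, hq'eq⟩ := mvpoly_content_factor hq'0
      obtain ⟨a, p₁, dp, ha, hcp, hp'eq⟩ := mvpoly_content_factor hp'0
      have hq₁P : q₁ ∉ P := hnotP q₁ dq hcq
      have hp₁P : p₁ ∉ P := hnotP p₁ dp hcp
      have heq2 : z * (algebraMap V K' b * φ q₁) = algebraMap V K' a * φ p₁ := by
        have := heq'
        rw [hq'eq, hp'eq, map_mul, map_mul, hφC, hφC] at this
        exact this
      by_cases hba : b ∣ a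
      · obtain ⟨t, rfl⟩ := hba
        refine ⟨C t * p₁, q₁, hq₁P, ?_⟩
        have hb' : algebraMap V K' b ≠ 0 := by
          intro h
          apply hb (hinj _)
          · rw [map_zero]
            exact IsFractionRing.injective V' K'
              (by rw [map_zero, ← IsScalarTower.algebraMap_apply V V' K', h])
        rw [map_mul, hφC]
        apply mul_left_cancel₀ hb'
        calc algebraMap V K' b * (z * φ q₁) = z * (algebraMap V K' b * φ q₁) := by ring
          _ = algebraMap V K' (b * t) * φ p₁ := heq2
          _ = algebraMap V K' b * (algebraMap V K' t * φ p₁) := by rw [map_mul]; ring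
      · have hab : a ∣ b := (ValuationRing.dvd_total a b).resolve_right hba
        obtain ⟨t, rfl⟩ := hab
        exfalso
        have ht : ¬ IsUnit t := by
          rintro ⟨u, rfl⟩
          exact hba ⟨↑u⁻¹, by rw [mul_assoc, Units.mul_inv, mul_one]⟩
        have ha' : algebraMap V K' a ≠ 0 := fun h => ha (hVK'inj (by rw [h, map_zero]))
        have heq3 : z * (algebraMap V K' t * φ q₁) = φ p₁ := by
          apply mul_left_cancel₀ ha'
          calc algebraMap V K' a * (z * (algebraMap V K' t * φ q₁))
              = z * (algebraMap V K' (a * t) * φ q₁) := by rw [map_mul]; ring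
            _ = algebraMap V K' a * φ p₁ := heq2
        -- push to V'
        have heq4 : v' * (algebraMap V V' t * φ' q₁) = φ' p₁ := by
          apply IsFractionRing.injective V' K'
          rw [map_mul, map_mul, ← hφeq, ← hφeq,
            ← IsScalarTower.algebraMap_apply V V' K']
          exact heq3
        have hdvd : algebraMap V V' t ∣ φ' p₁ :=
          ⟨v' * φ' q₁, by rw [← heq4]; ring⟩
        have := isUnit_of_dvd_unit hdvd (hunit p₁ hp₁P)
        exact ht (IsLocalHom.map_nonunit t this)
    · rintro ⟨p, q, hq, heq⟩
      have hu := hunit q hq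
      have hφq0 : φ q ≠ 0 := by
        rw [hφeq]
        exact fun h => hu.ne_zero (IsFractionRing.injective V' K' (by rw [h, map_zero]))
      constructor
      · obtain ⟨u, huq⟩ := hu
        refine ⟨φ' p * ↑u⁻¹, ?_⟩
        apply mul_right_cancel₀ hφq0
        calc algebraMap V' K' (φ' p * ↑u⁻¹) * φ q
            = algebraMap V' K' (φ' p * ↑u⁻¹ * φ' q) := by rw [hφeq q, ← map_mul]
          _ = algebraMap V' K' (φ' p) := by rw [← huq, mul_assoc, Units.inv_mul, mul_one]
          _ = φ p := (hφeq p).symm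
          _ = z * φ q := heq.symm
      · have hzdiv : z = φ p / φ q := by
          rw [eq_div_iff hφq0]; exact heq
        rw [hFdef, IntermediateField.mem_adjoin_range_iff]
        refine ⟨MvPolynomial.map (algebraMap V K) p, MvPolynomial.map (algebraMap V K) q, ?_⟩
        rw [aeval_map_algebraMap (A := K), aeval_map_algebraMap (A := K)]
        rw [hzdiv, hφdef]
  have hφne : ∀ q : MvPolynomial (Fin n) V, q ∉ P → φ q ≠ 0 := by
    intro q hq h
    rw [hφeq] at h
    exact (hunit q hq).ne_zero (IsFractionRing.injective V' K' (by rw [h, map_zero]))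
  -- claim 3
  have hunitsK : ∀ y : P.primeCompl, IsUnit (φ.toRingHom y.1) := fun y =>
    isUnit_iff_ne_zero.mpr (hφne y.1 y.2)
  set ℓ : Localization P.primeCompl →+* K' := IsLocalization.lift hunitsK with hℓdef
  have hℓmem : ∀ zL : Localization P.primeCompl, ℓ zL ∈ W := by
    intro zL
    obtain ⟨⟨pz, qz⟩, rfl⟩ := IsLocalization.mk'_surjective P.primeCompl zL
    have hspec : φ.toRingHom pz = φ.toRingHom qz.1 * ℓ (IsLocalization.mk' _ pz qz) :=
      (IsLocalization.lift_mk'_spec _ _ _ _).mp rfl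
    exact (hW _).mpr ((key _).mpr ⟨pz, qz.1, qz.2, by rw [mul_comm]; exact hspec.symm⟩)
  set ℓ' : Localization P.primeCompl →+* W := ℓ.codRestrict W hℓmem with hℓ'def
  have hℓ'inj : Function.Injective ℓ' := by
    rw [injective_iff_map_eq_zero]
    intro zL h0
    obtain ⟨⟨pz, qz⟩, rfl⟩ := IsLocalization.mk'_surjective P.primeCompl zL
    have h1 : ℓ (IsLocalization.mk' _ pz qz) = 0 := congrArg Subtype.val h0
    have hspec : φ.toRingHom pz = φ.toRingHom qz.1 * ℓ (IsLocalization.mk' _ pz qz) :=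
      (IsLocalization.lift_mk'_spec _ _ _ _).mp rfl
    rw [h1, mul_zero] at hspec
    rw [hφ'injK pz hspec]
    exact IsLocalization.mk'_zero _
  have hℓ'surj : Function.Surjective ℓ' := by
    intro w0
    obtain ⟨p, q, hq, heq⟩ := (key _).mp ((hW _).mp w0.2)
    refine ⟨IsLocalization.mk' _ p (⟨q, hq⟩ : P.primeCompl), ?_⟩
    apply Subtype.ext
    show ℓ (IsLocalization.mk' _ p _) = (w0 : K')
    apply (IsLocalization.lift_mk'_spec _ _ _ _).mpr
    show φ p = φ q * (w0 : K')
    rw [← heq]; ring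
  have claim3 : ∃ hP : P.IsPrime, Nonempty (W ≃+* Localization (@Ideal.primeCompl _ _ P hP)) :=
    ⟨hPprime, ⟨(RingEquiv.ofBijective ℓ' ⟨hℓ'inj, hℓ'surj⟩).symm⟩⟩
  refine ⟨claim1, key, claim3, ?_⟩
  -- claim 4 : ind-smoothness
  intro E _ _ hE w hw
  obtain ⟨m, π, hπ, -⟩ := hE.out
  have hz : ∀ j : Fin m, ∃ p q : MvPolynomial (Fin n) V, q ∉ P ∧
      ((w (π (X j)) : W) : K') * φ q = φ p := fun j =>
    (key _).mp ((hW _).mp (w (π (X j))).2)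
  choose pf qf hqf hzf using hz
  set qq : MvPolynomial (Fin n) V := ∏ j : Fin m, qf j with hqqdef
  have hqq : qq ∉ P := by
    intro h
    obtain ⟨j, _, hj⟩ := Ideal.IsPrime.prod_mem_iff.mp h
    exact hqf j hj
  set S := Localization.Away qq with hSdef
  haveI hfs1 : Algebra.FormallySmooth V (MvPolynomial (Fin n) V) :=
    Algebra.FormallySmooth.of_equiv
      (MvPolynomial.renameEquiv V (Equiv.ulift : ULift.{u} (Fin n) ≃ Fin n))
  haveI hsm1 : Algebra.Smooth V (MvPolynomial (Fin n) V) := ⟨hfs1, inferInstance⟩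
  haveI hsm2 : Algebra.Smooth (MvPolynomial (Fin n) V) S :=
    Algebra.Smooth.of_isLocalization_Away qq
  haveI hsmooth : Algebra.Smooth V S := Algebra.Smooth.comp V (MvPolynomial (Fin n) V) S
  have hupow : ∀ y : Submonoid.powers qq, IsUnit (φ.toRingHom y.1) := by
    intro y
    obtain ⟨k, hk⟩ := (Submonoid.mem_powers_iff _ _).mp y.2
    have : φ.toRingHom (y : MvPolynomial (Fin n) V) = (φ qq) ^ k := by rw [← hk, map_pow]; rfl
    rw [this]
    exact (isUnit_iff_ne_zero.mpr (hφne qq hqq)).pow k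
  set ℓS : S →+* K' := IsLocalization.lift hupow with hℓSdef
  have hℓSmem : ∀ s : S, ℓS s ∈ W := by
    intro s
    obtain ⟨⟨r, t⟩, rfl⟩ := IsLocalization.mk'_surjective (Submonoid.powers qq) s
    obtain ⟨k, hk⟩ := (Submonoid.mem_powers_iff _ _).mp t.2
    have htP : (t : MvPolynomial (Fin n) V) ∉ P := by
      intro h
      rw [← hk] at h
      exact hqq (hPprime.mem_of_pow_mem k h)
    have hspec : φ.toRingHom r = φ.toRingHom t.1 * ℓS (IsLocalization.mk' _ r t) :=
      (IsLocalization.lift_mk'_spec _ _ _ _).mp rfl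
    exact (hW _).mpr ((key _).mpr ⟨r, t.1, htP, by rw [mul_comm]; exact hspec.symm⟩)
  have hℓSinj : ∀ s : S, ℓS s = 0 → s = 0 := by
    intro s h0
    obtain ⟨⟨r, t⟩, rfl⟩ := IsLocalization.mk'_surjective (Submonoid.powers qq) s
    have hspec : φ.toRingHom r = φ.toRingHom t.1 * ℓS (IsLocalization.mk' _ r t) :=
      (IsLocalization.lift_mk'_spec _ _ _ _).mp rfl
    rw [h0, mul_zero] at hspec
    rw [hφ'injK r hspec]
    exact IsLocalization.mk'_zero _
  set sfun : Fin m → S := fun j => IsLocalization.mk' S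
    (pf j * ∏ i ∈ Finset.univ.erase j, qf i)
    (⟨qq, Submonoid.mem_powers qq⟩ : Submonoid.powers qq) with hsfundef
  set ψ : MvPolynomial (Fin m) V →ₐ[V] S := MvPolynomial.aeval sfun with hψdef
  have hCS : ∀ v : V, ℓS (algebraMap V S v) = algebraMap V K' v := by
    intro v
    rw [IsScalarTower.algebraMap_apply V (MvPolynomial (Fin n) V) S,
      IsLocalization.lift_eq]
    show φ (algebraMap V _ v) = _
    rw [AlgHom.commutes]
  have hsj : ∀ j, ℓS (sfun j) = ((w (π (X j)) : W) : K') := by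
    intro j
    apply (IsLocalization.lift_mk'_spec _ _ _ _).mpr
    show φ (pf j * ∏ i ∈ Finset.univ.erase j, qf i) =
      φ qq * ((w (π (X j)) : W) : K')
    have h1 : qq = qf j * ∏ i ∈ Finset.univ.erase j, qf i :=
      (Finset.mul_prod_erase Finset.univ qf (Finset.mem_univ j)).symm
    calc φ (pf j * ∏ i ∈ Finset.univ.erase j, qf i)
        = φ (pf j) * φ (∏ i ∈ Finset.univ.erase j, qf i) := map_mul _ _ _
      _ = (((w (π (X j)) : W) : K') * φ (qf j)) *
            φ (∏ i ∈ Finset.univ.erase j, qf i) := by rw [hzf j]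
      _ = φ (qf j * ∏ i ∈ Finset.univ.erase j, qf i) *
            ((w (π (X j)) : W) : K') := by rw [map_mul]; ring
      _ = φ qq * ((w (π (X j)) : W) : K') := by rw [← h1]
  have hcommhom : ℓS.comp ψ.toRingHom = (W.subtype.comp w).comp π.toRingHom := by
    apply MvPolynomial.ringHom_ext
    · intro v
      simp only [RingHom.comp_apply, AlgHom.toRingHom_eq_coe, RingHom.coe_coe]
      rw [show (ψ (C v) : S) = algebraMap V S v from aeval_C _ v, hCS]
      have h2 : π (C v) = algebraMap V E v := by
        rw [show (C v : MvPolynomial (Fin m) V) = algebraMap V _ v from rfl, AlgHom.commutes]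
      rw [h2]
      have h3 := congrArg (fun f => f v) (congrArg DFunLike.coe hw)
      simp only [RingHom.comp_apply] at h3
      rw [h3]
      rfl
    · intro j
      simp only [RingHom.comp_apply, AlgHom.toRingHom_eq_coe, RingHom.coe_coe]
      rw [show ψ (X j) = sfun j from aeval_X _ j, hsj j]
      rfl
  have hcomm : ∀ r : MvPolynomial (Fin m) V, ℓS (ψ r) = ((w (π r) : W) : K') :=
    fun r => congrArg (fun f => f r) (congrArg DFunLike.coe hcommhom)
  have hker : ∀ r ∈ RingHom.ker π.toRingHom, ψ r = 0 := by
    intro r hr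
    apply hℓSinj
    rw [hcomm r]
    rw [RingHom.mem_ker] at hr
    rw [show π r = 0 from hr, map_zero]
    rfl
  set e := Ideal.quotientKerAlgEquivOfSurjective (f := π) hπ with hedef
  set g0 : (MvPolynomial (Fin m) V ⧸ RingHom.ker π.toRingHom) →ₐ[V] S :=
    Ideal.Quotient.liftₐ _ ψ hker with hg0def
  set g : E →ₐ[V] S := g0.comp e.symm.toAlgHom with hgdef
  have hgπ : ∀ r, g (π r) = ψ r := by
    intro r
    show g0 (e.symm (π r)) = ψ r
    have h1 : e.symm (π r) = Ideal.Quotient.mk _ r := by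
      apply e.injective
      rw [AlgEquiv.apply_symm_apply]
      rfl
    rw [h1]
    show Ideal.Quotient.liftₐ _ ψ hker (Ideal.Quotient.mk _ r) = ψ r
    rw [Ideal.Quotient.liftₐ_apply]
    rfl
  refine ⟨S, inferInstance, inferInstance, hsmooth, g, ℓS.codRestrict W hℓSmem, ?_, ?_⟩
  · apply RingHom.ext
    intro e'
    obtain ⟨r, rfl⟩ := hπ e'
    apply Subtype.ext
    show ℓS (g (π r)) = ((w (π r) : W) : K')
    rw [hgπ r, hcomm r]
  · apply RingHom.ext
    intro v
    apply Subtype.ext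
    show ℓS (algebraMap V S v) = algebraMap V K' v
    exact hCS v
end

section
/- Let V' be a valuation ring and z ∈ V' a nonzero nonunit. Then: (a) the union q₁' of all prime ideals of V' not containing z is a prime ideal not containing z, hence the greatest prime ideal of V' not containing z (it corresponds to the maximal ideal of the localization of V' at the multiplicative set generated by z); (b) the radical of zV' is the smallest prime ideal q' of V' containing z; and (c) there is no prime ideal of V' strictly between q₁' and q' (i.e., height(q'/q₁') = 1). -/
universe u

/-- Let `V'` be a valuation ring and `z ∈ V'` a nonzero nonunit.  Then (a) the
union `q₁'` of all primes of `V'` not containing `z` is a prime ideal not containing `z`, it is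
the greatest prime not containing `z`, and it is the contraction of the maximal ideal of the
localization of `V'` away from `z`; (b) the radical of `zV'` is the smallest prime `q'`
containing `z`; (c) there is no prime of `V'` strictly between `q₁'` and `q'`. -/
theorem valuationRing_adjacent_primes_of_nonunit
    (V' : Type u) [CommRing V'] [IsDomain V'] [ValuationRing V']
    (z : V') (hz0 : z ≠ 0) (hzu : ¬IsUnit z) :
    ∃ q₁ q' : Ideal V',
      ((q₁ : Set V') = ⋃ p ∈ {p : Ideal V' | p.IsPrime ∧ z ∉ p}, (p : Set V')) ∧
      q₁.IsPrime ∧ z ∉ q₁ ∧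
      (∀ p : Ideal V', p.IsPrime → z ∉ p → p ≤ q₁) ∧
      (∀ x : V', x ∈ q₁ ↔ ¬IsUnit (algebraMap V' (Localization.Away z) x)) ∧
      q' = (Ideal.span {z}).radical ∧ q'.IsPrime ∧ z ∈ q' ∧
      (∀ p : Ideal V', p.IsPrime → z ∈ p → q' ≤ p) ∧
      (∀ p : Ideal V', p.IsPrime → ¬(q₁ < p ∧ p < q')) := by
  set L := Localization.Away z
  have hsub : Submonoid.powers z ≤ nonZeroDivisors V' := by
    rintro a ⟨n, rfl⟩
    exact pow_mem (mem_nonZeroDivisors_of_ne_zero hz0) n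
  haveI : IsDomain L := IsLocalization.isDomain_localization hsub
  have hinj : Function.Injective (algebraMap V' L) :=
    IsLocalization.injective L hsub
  -- the localization is again a valuation ring, in particular local
  haveI : ValuationRing L := by
    rw [ValuationRing.iff_dvd_total]
    constructor
    intro a b
    obtain ⟨⟨xa, sa⟩, ha⟩ := IsLocalization.mk'_surjective (Submonoid.powers z) a
    obtain ⟨⟨xb, sb⟩, hb⟩ := IsLocalization.mk'_surjective (Submonoid.powers z) b
    have ua : IsUnit (algebraMap V' L sa) := IsLocalization.map_units L sa
    have ub : IsUnit (algebraMap V' L sb) := IsLocalization.map_units L sb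
    have ha' : a = algebraMap V' L xa * ↑ua.unit⁻¹ := by
      rw [← ha, IsLocalization.mk'_eq_iff_eq_mul]
      rw [mul_assoc, IsUnit.val_inv_mul, mul_one]
    have hb' : b = algebraMap V' L xb * ↑ub.unit⁻¹ := by
      rw [← hb, IsLocalization.mk'_eq_iff_eq_mul]
      rw [mul_assoc, IsUnit.val_inv_mul, mul_one]
    rcases ValuationRing.dvd_total xa xb with ⟨c, hc⟩ | ⟨c, hc⟩
    · left
      refine ⟨algebraMap V' L c * ↑ua.unit * ↑ub.unit⁻¹, ?_⟩
      rw [ha', hb', hc, map_mul]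
      rw [show algebraMap V' L xa * ↑ua.unit⁻¹ * (algebraMap V' L c * ↑ua.unit * ↑ub.unit⁻¹) = algebraMap V' L xa * algebraMap V' L c * ↑ub.unit⁻¹ * ↑ua.unit⁻¹ * ↑ua.unit by ring]
      exact (Units.inv_mul_cancel_right _ _).symm
    · right
      refine ⟨algebraMap V' L c * ↑ub.unit * ↑ua.unit⁻¹, ?_⟩
      rw [ha', hb', hc, map_mul]
      rw [show algebraMap V' L xb * ↑ub.unit⁻¹ * (algebraMap V' L c * ↑ub.unit * ↑ua.unit⁻¹) = algebraMap V' L xb * algebraMap V' L c * ↑ua.unit⁻¹ * ↑ub.unit⁻¹ * ↑ub.unit by ring]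
      exact (Units.inv_mul_cancel_right _ _).symm
  haveI : IsLocalRing L := ValuationRing.isLocalRing L
  set q₁ : Ideal V' := (IsLocalRing.maximalIdeal L).comap (algebraMap V' L) with hq₁def
  have hq₁mem : ∀ x : V', x ∈ q₁ ↔ ¬IsUnit (algebraMap V' L x) := by
    intro x
    rw [hq₁def, Ideal.mem_comap, IsLocalRing.mem_maximalIdeal, mem_nonunits_iff]
  have hq₁prime : q₁.IsPrime := Ideal.IsPrime.comap _
  have hzq₁ : z ∉ q₁ := by
    rw [hq₁mem]
    intro h
    exact h (IsLocalization.map_units L (⟨z, 1, pow_one z⟩ : Submonoid.powers z))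
  have hgreatest : ∀ p : Ideal V', p.IsPrime → z ∉ p → p ≤ q₁ := by
    intro p hp hzp x hx
    rw [hq₁mem]
    intro hu
    obtain ⟨y, hy⟩ := hu.exists_right_inv
    obtain ⟨⟨a, s⟩, hs⟩ := IsLocalization.mk'_surjective (Submonoid.powers z) y
    obtain ⟨n, hn⟩ := s.2
    have : algebraMap V' L (x * a) = algebraMap V' L (s : V') := by
      have := congrArg (· * algebraMap V' L (s : V')) hy
      simp only [one_mul, mul_assoc] at this
      rw [← hs, IsLocalization.mk'_spec] at this
      rw [map_mul]; exact this
    have hxa : x * a = z ^ n := by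
      have := hinj this
      rw [← hn] at *
      exact this
    have : z ^ n ∈ p := hxa ▸ Ideal.mul_mem_right _ _ hx
    exact hzp (hp.mem_of_pow_mem n this)
  set q' : Ideal V' := (Ideal.span {z}).radical with hq'def
  have hzq' : z ∈ q' := Ideal.le_radical (Ideal.subset_span rfl)
  have hq'prime : q'.IsPrime := by
    constructor
    · intro h
      rw [hq'def, Ideal.radical_eq_top, Ideal.span_singleton_eq_top] at h
      exact hzu h
    · intro a b hab
      obtain ⟨n, hn⟩ := hab
      rw [mul_pow] at hn
      rcases ValuationRing.dvd_total (a ^ n) (b ^ n) with ⟨c, hc⟩ | ⟨c, hc⟩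
      · right
        refine ⟨2 * n, ?_⟩
        have hb : b ^ (2 * n) = a ^ n * b ^ n * c := by
          rw [two_mul, pow_add]
          nth_rewrite 1 [hc]
          ring
        rw [hb]
        exact Ideal.mul_mem_right _ _ hn
      · left
        refine ⟨2 * n, ?_⟩
        have ha : a ^ (2 * n) = a ^ n * b ^ n * c := by
          rw [two_mul, pow_add]
          nth_rewrite 2 [hc]
          ring
        rw [ha]
        exact Ideal.mul_mem_right _ _ hn
  have hsmallest : ∀ p : Ideal V', p.IsPrime → z ∈ p → q' ≤ p := by
    intro p hp hzp
    rw [hq'def, hp.radical_le_iff, Ideal.span_le, Set.singleton_subset_iff]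
    exact hzp
  refine ⟨q₁, q', ?_, hq₁prime, hzq₁, hgreatest, hq₁mem, rfl, hq'prime, hzq', hsmallest, ?_⟩
  · ext x
    simp only [Set.mem_iUnion, SetLike.mem_coe, Set.mem_setOf_eq]
    constructor
    · intro hx
      exact ⟨q₁, ⟨hq₁prime, hzq₁⟩, hx⟩
    · rintro ⟨p, ⟨hp, hzp⟩, hx⟩
      exact hgreatest p hp hzp hx
  · rintro p hp ⟨h1, h2⟩
    by_cases hzp : z ∈ p
    · exact absurd (hsmallest p hp hzp) (not_le_of_gt h2)
    · exact absurd (hgreatest p hp hzp) (not_le_of_gt h1)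
end

section
/- Let V ⊆ V' be an extension of valuation rings. For a prime ideal q' of V', let t_{q'} denote the transcendence degree of the fraction field of V'/q' over the fraction field of V/(q' ∩ V). Then for prime ideals q' ⊆ q'' of V' one has t_{q''} ≤ t_{q'}. -/
universe u v

/-- The transcendence degree of a commutative `R`-algebra `A`, as a cardinal: the supremum of the
cardinalities of the algebraically independent subsets of `A`. -/
noncomputable def trdegC (R A : Type*) [CommRing R] [CommRing A] [Algebra R A] : Cardinal :=
  ⨆ s : { s : Set A // AlgebraicIndependent R ((↑) : s → A) }, Cardinal.mk s.1
/-- The homomorphism of fraction fields induced by an injective homomorphism of domains. -/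
noncomputable def fractionRingMap {A : Type u} {B : Type v} [CommRing A] [IsDomain A]
    [CommRing B] [IsDomain B] (g : A →+* B) (hg : Function.Injective g) :
    FractionRing A →+* FractionRing B :=
  IsLocalization.map (M := nonZeroDivisors A) (T := nonZeroDivisors B)
    (Localization (nonZeroDivisors B)) g
    (fun x hx => mem_nonZeroDivisors_of_ne_zero (fun h =>
      mem_nonZeroDivisors_iff_ne_zero.mp hx (hg (by simpa using h))))

/-- For an extension `V ⊆ V'` and a prime `q'` of `V'`, the transcendence degree `t_{q'}` of the
fraction field of `V'/q'` over the fraction field of `V/(q' ∩ V)`. -/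
noncomputable def quotTrdeg (V : Type u) (V' : Type v) [CommRing V] [IsDomain V] [CommRing V']
    [IsDomain V'] [Algebra V V'] (q' : Ideal V') (hq : q'.IsPrime) : Cardinal :=
  letI := hq
  letI : (q'.comap (algebraMap V V')).IsPrime := hq.comap _
  letI := (fractionRingMap
    (Ideal.quotientMap q' (algebraMap V V') le_rfl) Ideal.quotientMap_injective).toAlgebra
  trdegC (FractionRing (V ⧸ q'.comap (algebraMap V V'))) (FractionRing (V' ⧸ q'))


open Function in
theorem vr_pair_dvd {A : Type*} [CommRing A] [IsDomain A] [ValuationRing A]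
    {K : Type*} [Field K] [Algebra A K] [IsFractionRing A K] (a b : K) :
    (∃ d : A, a = b * algebraMap A K d) ∨ (∃ d : A, b = a * algebraMap A K d) := by
  rcases eq_or_ne b 0 with rfl | hb
  · right; exact ⟨0, by simp⟩
  rcases ValuationRing.isInteger_or_isInteger A (a / b) with ⟨d, hd⟩ | ⟨d, hd⟩
  · left
    refine ⟨d, ?_⟩
    rw [eq_comm, div_eq_iff hb] at hd
    rw [hd, mul_comm]
  · rcases eq_or_ne a 0 with rfl | ha
    · left; exact ⟨0, by simp⟩
    right
    refine ⟨d, ?_⟩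
    rw [inv_div, eq_comm, div_eq_iff ha] at hd
    rw [hd, mul_comm]

theorem vr_exists_dvd_all {A : Type*} [CommRing A] [IsDomain A] [ValuationRing A]
    {K : Type*} [Field K] [Algebra A K] [IsFractionRing A K]
    (T : Finset K) (hT : T.Nonempty) :
    ∃ c ∈ T, ∀ a ∈ T, ∃ d : A, a = c * algebraMap A K d := by
  classical
  induction T using Finset.cons_induction with
  | empty => exact absurd hT (by simp)
  | cons a T haT ih =>
    rcases T.eq_empty_or_nonempty with rfl | hT'
    · refine ⟨a, Finset.mem_cons_self _ _, ?_⟩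
      intro x hx
      rw [Finset.mem_cons] at hx
      rcases hx with rfl | hx
      · exact ⟨1, by simp⟩
      · simp at hx
    · obtain ⟨c, hcT, hc⟩ := ih hT'
      rcases vr_pair_dvd (A := A) a c with ⟨d, hd⟩ | ⟨d, hd⟩
      · refine ⟨c, Finset.mem_cons_of_mem hcT, ?_⟩
        intro x hx
        rcases Finset.mem_cons.mp hx with rfl | hx
        · exact ⟨d, hd⟩
        · exact hc x hx
      · refine ⟨a, Finset.mem_cons_self _ _, ?_⟩
        intro x hx
        rcases Finset.mem_cons.mp hx with rfl | hx
        · exact ⟨1, by simp⟩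
        · obtain ⟨e, he⟩ := hc x hx
          exact ⟨d * e, by rw [he, hd, map_mul, mul_assoc]⟩

theorem vr_quotient (V : Type*) [CommRing V] [IsDomain V] [ValuationRing V]
    (p : Ideal V) (hp : p.IsPrime) :
    letI := hp
    ValuationRing (V ⧸ p) := by
  letI := hp
  letI : PreValuationRing (V ⧸ p) := ⟨fun a b => ?_⟩
  · exact ⟨⟩
  obtain ⟨x, rfl⟩ := Ideal.Quotient.mk_surjective a
  obtain ⟨y, rfl⟩ := Ideal.Quotient.mk_surjective b
  obtain ⟨c, hc | hc⟩ := ValuationRing.cond x y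
  · exact ⟨Ideal.Quotient.mk p c, Or.inl (by rw [← map_mul, hc])⟩
  · exact ⟨Ideal.Quotient.mk p c, Or.inr (by rw [← map_mul, hc])⟩
theorem trdegC_le_master
    {A : Type u} {B : Type u} {D' : Type v} {D'' : Type v}
    [CommRing A] [IsDomain A] [ValuationRing A] [CommRing B] [IsDomain B]
    [CommRing D'] [IsDomain D'] [CommRing D''] [IsDomain D'']
    (φ : A →+* B) (g' : A →+* D') (g'' : B →+* D'') (π : D' →+* D'')
    (hg' : Function.Injective g') (hg'' : Function.Injective g'')
    (hπ : Function.Surjective π) (hsq : π.comp g' = g''.comp φ) :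
    @trdegC (FractionRing B) (FractionRing D'') _ _ (fractionRingMap g'' hg'').toAlgebra ≤
    @trdegC (FractionRing A) (FractionRing D') _ _ (fractionRingMap g' hg').toAlgebra := by
  classical
  letI aB : Algebra (FractionRing B) (FractionRing D'') := (fractionRingMap g'' hg'').toAlgebra
  letI aA : Algebra (FractionRing A) (FractionRing D') := (fractionRingMap g' hg').toAlgebra
  set KA := FractionRing A
  set KB := FractionRing B
  set F' := FractionRing D'
  set F'' := FractionRing D''
  -- the localization of D' at the preimage of the nonzerodivisors of D''
  set M : Submonoid D' := (nonZeroDivisors D'').comap (π : D' →* D'') with hMdef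
  have hMmem : ∀ b : D', b ∈ M ↔ π b ∈ nonZeroDivisors D'' := fun b => Iff.rfl
  have hMle : M ≤ nonZeroDivisors D' := by
    intro b hb
    refine mem_nonZeroDivisors_of_ne_zero (fun h => ?_)
    rw [hMmem] at hb
    rw [h, map_zero] at hb
    exact zero_notMem_nonZeroDivisors hb
  set L := Localization M
  set j : L →+* F' := IsLocalization.map (M := M) (T := nonZeroDivisors D')
    (Localization (nonZeroDivisors D')) (RingHom.id D') (show M ≤ (nonZeroDivisors D').comap (RingHom.id D') from fun b hb => hMle hb) with hjdef
  set r : L →+* F'' := IsLocalization.map (M := M) (T := nonZeroDivisors D'')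
    (Localization (nonZeroDivisors D'')) π (show M ≤ (nonZeroDivisors D'').comap π from fun b hb => hb) with hrdef
  have hj : j.comp (algebraMap D' L) = algebraMap D' F' := by
    rw [hjdef, IsLocalization.map_comp, RingHom.comp_id]
  have hr : r.comp (algebraMap D' L) = (algebraMap D'' F'').comp π := by
    rw [hrdef, IsLocalization.map_comp]
  have hα' : (algebraMap KA F').comp (algebraMap A KA) = (algebraMap D' F').comp g' := by
    show (fractionRingMap g' hg').comp (algebraMap A KA) = _
    exact IsLocalization.map_comp _
  have hα'' : (algebraMap KB F'').comp (algebraMap B KB) = (algebraMap D'' F'').comp g'' := by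
    show (fractionRingMap g'' hg'').comp (algebraMap B KB) = _
    exact IsLocalization.map_comp _
  have hjinj : Function.Injective j := by
    rw [injective_iff_map_eq_zero]
    intro z hz
    obtain ⟨a, s, rfl⟩ := IsLocalization.exists_mk'_eq M z
    rw [hjdef, IsLocalization.map_mk'] at hz
    rw [IsLocalization.mk'_eq_zero_iff] at hz
    obtain ⟨m, hm⟩ := hz
    have ha : (RingHom.id D') a = 0 := (m.2.2 _ (by rw [mul_comm] at hm; exact hm))
    rw [RingHom.id_apply] at ha
    rw [ha, IsLocalization.mk'_zero]
  have hrsurj : Function.Surjective r := by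
    intro y
    obtain ⟨a, s, rfl⟩ := IsLocalization.exists_mk'_eq (nonZeroDivisors D'') y
    obtain ⟨a₀, rfl⟩ := hπ a
    obtain ⟨s₀, hs₀⟩ := hπ (s : D'')
    have hs₀M : s₀ ∈ M := by rw [hMmem, hs₀]; exact s.2
    refine ⟨IsLocalization.mk' L a₀ ⟨s₀, hs₀M⟩, ?_⟩
    rw [hrdef, IsLocalization.map_mk']
    congr 1
    exact Subtype.ext hs₀
  -- the supremum argument
  unfold trdegC
  refine ciSup_le' ?_
  rintro ⟨s, hs⟩
  -- lift the family
  choose ℓ hℓ using fun i : s => hrsurj i.1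
  set xh : s → F' := fun i => j (ℓ i) with hxhdef
  have key : AlgebraicIndependent KA xh := by
    rw [algebraicIndependent_iff]
    intro P hP
    by_contra hP0
    classical
    rw [MvPolynomial.aeval_def] at hP
    set T : Finset KA := P.support.image (fun m => P.coeff m) with hTdef
    have hTne : T.Nonempty :=
      Finset.Nonempty.image (MvPolynomial.support_nonempty.mpr hP0) _
    obtain ⟨c, hcT, hc⟩ := vr_exists_dvd_all (A := A) T hTne
    have hc0 : c ≠ 0 := by
      obtain ⟨m, hm, rfl⟩ := Finset.mem_image.mp hcT
      exact MvPolynomial.mem_support_iff.mp hm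
    have hdall : ∀ m : (s →₀ ℕ), ∃ dm : A,
        (m ∈ P.support → P.coeff m = c * algebraMap A KA dm) := by
      intro m
      by_cases hm : m ∈ P.support
      · obtain ⟨dm, hdm⟩ := hc _ (Finset.mem_image_of_mem _ hm)
        exact ⟨dm, fun _ => hdm⟩
      · exact ⟨0, fun h => absurd h hm⟩
    choose d hdspec using hdall
    set Q : MvPolynomial s A := ∑ m ∈ P.support, MvPolynomial.monomial m (d m) with hQdef
    have hQcoeff : ∀ m, Q.coeff m = if m ∈ P.support then d m else 0 := by
      intro m
      rw [hQdef, MvPolynomial.coeff_sum]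
      simp only [MvPolynomial.coeff_monomial]
      exact Finset.sum_ite_eq' P.support m d
    have hQP : MvPolynomial.C c * MvPolynomial.map (algebraMap A KA) Q = P := by
      apply MvPolynomial.ext
      intro m
      rw [MvPolynomial.coeff_C_mul, MvPolynomial.coeff_map, hQcoeff]
      by_cases hm : m ∈ P.support
      · rw [if_pos hm]; exact (hdspec m hm).symm
      · rw [if_neg hm, map_zero, mul_zero]
        exact (MvPolynomial.notMem_support_iff.mp hm).symm
    obtain ⟨m₀, hm₀sup, hm₀⟩ := Finset.mem_image.mp hcT
    have hdm₀ : d m₀ = 1 := by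
      have h1 : c * algebraMap A KA (d m₀) = c * 1 := by
        rw [mul_one, ← hdspec m₀ hm₀sup, hm₀]
      exact IsFractionRing.injective A KA (by rw [mul_left_cancel₀ hc0 h1, map_one])
    rw [← hQP, MvPolynomial.eval₂_mul, MvPolynomial.eval₂_C] at hP
    have hcF : (algebraMap KA F') c ≠ 0 := fun h =>
      hc0 ((algebraMap KA F').injective (by rw [h, map_zero]))
    have heval : MvPolynomial.eval₂ ((algebraMap KA F').comp (algebraMap A KA)) xh Q = 0 := by
      rw [← MvPolynomial.eval₂_map]
      rcases mul_eq_zero.mp hP with h | h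
      · exact absurd h hcF
      · exact h
    rw [hα'] at heval
    have hγ : (algebraMap D' F').comp g' = j.comp ((algebraMap D' L).comp g') := by
      rw [← RingHom.comp_assoc, hj]
    rw [hγ] at heval
    have heval2 : j (MvPolynomial.eval₂ ((algebraMap D' L).comp g') ℓ Q) = 0 := by
      rw [MvPolynomial.eval₂_comp_left]
      exact heval
    have heval3 : MvPolynomial.eval₂ ((algebraMap D' L).comp g') ℓ Q = 0 :=
      (injective_iff_map_eq_zero j).mp hjinj _ heval2
    have heval4 : MvPolynomial.eval₂ (r.comp ((algebraMap D' L).comp g')) (r ∘ ℓ) Q = 0 := by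
      rw [← MvPolynomial.eval₂_comp_left, heval3, map_zero]
    have hrℓ : (r ∘ ℓ) = fun i : s => (i : F'') := funext fun i => hℓ i
    have hcomp : r.comp ((algebraMap D' L).comp g') =
        (algebraMap KB F'').comp ((algebraMap B KB).comp φ) := by
      ext a
      calc r ((algebraMap D' L) (g' a)) = (algebraMap D'' F'') (π (g' a)) :=
            RingHom.congr_fun hr (g' a)
        _ = (algebraMap D'' F'') (g'' (φ a)) := by rw [show π (g' a) = g'' (φ a) from RingHom.congr_fun hsq a]
        _ = (algebraMap KB F'') ((algebraMap B KB) (φ a)) := (RingHom.congr_fun hα'' (φ a)).symm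
    rw [hrℓ, hcomp] at heval4
    set R : MvPolynomial s KB := MvPolynomial.map ((algebraMap B KB).comp φ) Q with hRdef
    have haevalR : MvPolynomial.aeval ((↑) : s → F'') R = 0 := by
      rw [MvPolynomial.aeval_def, hRdef, MvPolynomial.eval₂_map]
      exact heval4
    have hR0 : R = 0 := (algebraicIndependent_iff.mp hs) R haevalR
    have h10 : (1 : KB) = 0 := by
      have hcoeff := congrArg (fun p => MvPolynomial.coeff m₀ p) hR0
      simp only [hRdef, MvPolynomial.coeff_map, hQcoeff, hm₀sup, if_pos, hdm₀, map_one,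
        MvPolynomial.coeff_zero, RingHom.coe_comp, Function.comp_apply] at hcoeff
      exact hcoeff.symm ▸ rfl
    exact one_ne_zero h10

  have hmk : Cardinal.mk s = Cardinal.mk (Set.range xh) :=
    (Cardinal.mk_range_eq _ key.injective).symm
  rw [hmk]
  exact le_ciSup (Cardinal.bddAbove_range _) (⟨Set.range xh, key.coe_range⟩ :
    { t : Set F' // AlgebraicIndependent KA ((↑) : t → F') })

/-- For an extension `V ⊆ V'` of valuation rings and primes `q' ⊆ q''` of `V'`,
the transcendence degree `t_{q''}` of `Frac(V'/q'')` over `Frac(V/(q'' ∩ V))` is at most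
`t_{q'}`. -/
theorem quotTrdeg_antitone
    (V : Type u) (V' : Type v) [CommRing V] [IsDomain V] [ValuationRing V]
    [CommRing V'] [IsDomain V'] [ValuationRing V'] [Algebra V V']
    (hinj : Function.Injective (algebraMap V V'))
    [IsLocalHom (algebraMap V V')]
    (q' q'' : Ideal V') (hq' : q'.IsPrime) (hq'' : q''.IsPrime) (hle : q' ≤ q'') :
    quotTrdeg V V' q'' hq'' ≤ quotTrdeg V V' q' hq' := by
  letI := hq'
  letI := hq''
  letI hp' : (q'.comap (algebraMap V V')).IsPrime := hq'.comap _
  letI hp'' : (q''.comap (algebraMap V V')).IsPrime := hq''.comap _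
  letI : ValuationRing (V ⧸ q'.comap (algebraMap V V')) := vr_quotient V _ hp'
  have hple : q'.comap (algebraMap V V') ≤ q''.comap (algebraMap V V') := Ideal.comap_mono hle
  have hπ : Function.Surjective (Ideal.Quotient.factor hle) := by
    intro y
    obtain ⟨v, rfl⟩ := Ideal.Quotient.mk_surjective y
    exact ⟨Ideal.Quotient.mk q' v, Ideal.Quotient.factor_mk _ _⟩
  have hsq : (Ideal.Quotient.factor hle).comp
        (Ideal.quotientMap q' (algebraMap V V') le_rfl)
      = (Ideal.quotientMap q'' (algebraMap V V') le_rfl).comp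
        (Ideal.Quotient.factor hple) := by
    apply RingHom.ext
    intro a
    obtain ⟨v, rfl⟩ := Ideal.Quotient.mk_surjective a
    rw [RingHom.comp_apply, RingHom.comp_apply, Ideal.quotientMap_mk,
      Ideal.Quotient.factor_mk, Ideal.Quotient.factor_mk, Ideal.quotientMap_mk]
  exact trdegC_le_master (Ideal.Quotient.factor hple)
    (Ideal.quotientMap q' (algebraMap V V') le_rfl)
    (Ideal.quotientMap q'' (algebraMap V V') le_rfl)
    (Ideal.Quotient.factor hle)
    Ideal.quotientMap_injective Ideal.quotientMap_injective hπ hsq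
end
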